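/- Let G be a d-regular simple graph on n vertices with 1 ≤ d, let A be its adjacency matrix, let λ₂ ≥ 0 be the second largest eigenvalue of A, set p = d/n, α = p/(λ₂ + p) and β = 1/(λ₂ + p). Then the real symmetric matrix (1 − α²)·I + (β² − 2αβ)·A + α²·J, where I is the n×n identity matrix and J is the n×n all-ones matrix, is positive semidefinite. -/

import Mathlib

open Matrix Finset

local notation "⟪" x ", " y "⟫" => @inner ℝ _ _ x y

/-- Schur-type lemma: the entrywise square of a real positive semidefinite matrix is
positive semidefinite. -/
lemma hadamard_self_posSemidef {m : Type*} [Fintype m] {M : Matrix m m ℝ}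
    (hM : M.PosSemidef) : (Matrix.hadamard M M).PosSemidef := by
  obtain ⟨B, hB⟩ : ∃ B : Matrix m m ℝ, M = Bᴴ * B := by
    classical
    open scoped MatrixOrder in
    exact CStarAlgebra.nonneg_iff_eq_star_mul_self.mp hM.nonneg
  have key : Matrix.hadamard M M =
      (Matrix.of (fun (kl : m × m) a => B kl.1 a * B kl.2 a))ᴴ
        * (Matrix.of (fun (kl : m × m) a => B kl.1 a * B kl.2 a)) := by
    have entry : ∀ a b, M a b = ∑ k, B k a * B k b := by
      intro a b
      rw [hB]
      simp [Matrix.mul_apply, Matrix.conjTranspose_apply]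
    ext a b
    simp only [Matrix.hadamard_apply, Matrix.mul_apply, Matrix.conjTranspose_apply,
      Matrix.of_apply, star_trivial, entry]
    rw [Finset.sum_mul_sum, ← Finset.sum_product']
    rw [show (Finset.univ ×ˢ Finset.univ : Finset (m × m)) = Finset.univ by
      simp [Finset.univ_product_univ]]
    apply Finset.sum_congr rfl
    intro kl _
    ring
  rw [key]
  exact Matrix.posSemidef_conjTranspose_mul_self _

/-- Let `G` be a `d`-regular simple graph on `n ≥ 2` vertices with
`1 ≤ d`, let `A` be its adjacency matrix, let `λ₂ = μ 1 ≥ 0` be its second largest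
eigenvalue (where `μ` lists the eigenvalues in decreasing order), and set `p = d/n`,
`α = p/(λ₂ + p)`, `β = 1/(λ₂ + p)`. Then the matrix
`(1 − α²)·I + (β² − 2αβ)·A + α²·J` (with `J` the all-ones matrix), i.e. the entrywise
square `M ∘ M` of `M = (1 − α)·I − β·A + α·J`, is positive semidefinite. -/
theorem stmt_12 (n d : ℕ) (hn : 2 ≤ n) (hd : 1 ≤ d)
    (G : SimpleGraph (Fin n)) [DecidableRel G.Adj]
    (hreg : G.IsRegularOfDegree d)
    (hA : (G.adjMatrix ℝ).IsHermitian)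
    (μ : Fin n → ℝ) (hμ : Antitone μ)
    (hperm : ∃ σ : Equiv.Perm (Fin n), μ = hA.eigenvalues ∘ σ)
    (hmu2 : 0 ≤ μ ⟨1, by omega⟩)
    (p α β : ℝ)
    (hp : p = (d : ℝ) / n)
    (hα : α = p / (μ ⟨1, by omega⟩ + p))
    (hβ : β = 1 / (μ ⟨1, by omega⟩ + p)) :
    ((1 - α ^ 2) • (1 : Matrix (Fin n) (Fin n) ℝ) + (β ^ 2 - 2 * α * β) • G.adjMatrix ℝ
        + α ^ 2 • Matrix.of (fun _ _ => (1 : ℝ))).PosSemidef := by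
  haveI : NeZero n := ⟨by omega⟩
  set A := G.adjMatrix ℝ with hAdef
  set lam := μ ⟨1, by omega⟩ with hlam
  set V := hA.eigenvectorBasis with hV
  set ν := hA.eigenvalues with hν
  set W : Fin n → (Fin n → ℝ) := fun i => (WithLp.equiv 2 (Fin n → ℝ)) (V i) with hW
  -- symmetry of A in dot products
  have hsym : ∀ v w : Fin n → ℝ, v ⬝ᵥ (A *ᵥ w) = (A *ᵥ v) ⬝ᵥ w := by
    intro v w
    rw [Matrix.dotProduct_mulVec, ← Matrix.vecMul_transpose, G.transpose_adjMatrix]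
  -- repr of basis vectors as dot products
  have reprdot : ∀ (x : Fin n → ℝ) (i : Fin n),
      V.repr ((WithLp.equiv 2 (Fin n → ℝ)).symm x) i = W i ⬝ᵥ x := by
    intro x i
    rw [V.repr_apply_apply, EuclideanSpace.inner_eq_star_dotProduct]
    simp [dotProduct, hW, mul_comm]
  -- expansion of dot products in the eigenbasis
  have expand : ∀ y z : Fin n → ℝ, y ⬝ᵥ z = ∑ i, (W i ⬝ᵥ y) * (W i ⬝ᵥ z) := by
    intro y z
    have h1 : y ⬝ᵥ z =
        ⟪(WithLp.equiv 2 (Fin n → ℝ)).symm y, (WithLp.equiv 2 (Fin n → ℝ)).symm z⟫ := by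
      rw [dotProduct_comm]
      rfl
    rw [h1, ← V.repr.inner_map_map, EuclideanSpace.inner_eq_star_dotProduct]
    simp only [dotProduct]
    exact Finset.sum_congr rfl fun i _ => by
      rw [mul_comm]; exact congrArg₂ (· * ·) (reprdot y i) (reprdot z i)
  -- W i is an eigenvector
  have hAdot : ∀ (x : Fin n → ℝ) (i : Fin n), W i ⬝ᵥ (A *ᵥ x) = ν i * (W i ⬝ᵥ x) := by
    intro x i
    rw [hsym]
    have heig : A *ᵥ W i = ν i • W i := hA.mulVec_eigenvectorBasis i
    rw [heig]
    simp [dotProduct, Finset.mul_sum, mul_assoc]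
  -- all eigenvalues are at most d
  have hbound : ∀ i, |ν i| ≤ (d : ℝ) := by
    intro i
    have hvne : W i ≠ 0 := by
      intro h
      exact V.orthonormal.ne_zero i ((WithLp.equiv 2 (Fin n → ℝ)).injective (by simpa [hW] using h))
    have hev : Module.End.HasEigenvalue (Matrix.toLin' A) (ν i) := by
      refine Module.End.hasEigenvalue_of_hasEigenvector
        (x := W i) ⟨Module.End.mem_eigenspace_iff.mpr ?_, hvne⟩
      rw [Matrix.toLin'_apply]
      exact hA.mulVec_eigenvectorBasis i
    obtain ⟨k, hk⟩ := eigenvalue_mem_ball hev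
    rw [Metric.mem_closedBall] at hk
    have hdiag : A k k = 0 := by simp [hAdef]
    have hrow : ∑ j ∈ Finset.univ.erase k, ‖A k j‖ = (d : ℝ) := by
      have h1 : ∀ j, ‖A k j‖ = A k j := by
        intro j
        simp only [hAdef, SimpleGraph.adjMatrix_apply]
        split <;> simp
      simp only [h1]
      rw [Finset.sum_erase_eq_sub (Finset.mem_univ k), hdiag, sub_zero]
      simp only [hAdef, SimpleGraph.adjMatrix_apply, Finset.sum_boole]
      rw [← SimpleGraph.neighborFinset_eq_filter, SimpleGraph.card_neighborFinset_eq_degree,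
        hreg k]
    rw [hdiag, hrow, Real.dist_eq, sub_zero] at hk
    exact hk
  -- eigenvalues other than at σ 0 are at most lam
  obtain ⟨σ, hσ⟩ := hperm
  set i₀ : Fin n := σ ⟨0, by omega⟩ with hi₀
  have hν_le : ∀ i : Fin n, i ≠ i₀ → ν i ≤ lam := by
    intro i hi
    have h1 : ν i = μ (σ.symm i) := by rw [hσ]; simp
    rw [h1, hlam]
    apply hμ
    have h2 : σ.symm i ≠ ⟨0, by omega⟩ := by
      intro h
      apply hi
      rw [hi₀, ← h, Equiv.apply_symm_apply]
    rw [Fin.le_def]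
    have := Fin.ext_iff.not.mp h2
    simp only [Fin.val_mk] at this ⊢
    omega
  -- A *ᵥ ones = d • ones
  have hones : A *ᵥ (fun _ => (1 : ℝ)) = fun _ => (d : ℝ) := by
    funext v
    show ∑ j, A v j * 1 = (d : ℝ)
    simp only [mul_one, hAdef, SimpleGraph.adjMatrix_apply, Finset.sum_boole]
    rw [← SimpleGraph.neighborFinset_eq_filter, SimpleGraph.card_neighborFinset_eq_degree,
      hreg v]
  -- THE KEY INEQUALITY
  have key : ∀ x : Fin n → ℝ,
      x ⬝ᵥ (A *ᵥ x) ≤ lam * (x ⬝ᵥ x) + p * (∑ i, x i) ^ 2 := by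
    intro x
    set c : Fin n → ℝ := fun i => W i ⬝ᵥ x with hc
    set e : Fin n → ℝ := fun i => W i ⬝ᵥ (fun _ => (1 : ℝ)) with he
    have hxx : x ⬝ᵥ x = ∑ i, (c i) ^ 2 := by
      rw [expand x x]; exact Finset.sum_congr rfl fun i _ => (sq (c i)).symm
    have hAx : x ⬝ᵥ (A *ᵥ x) = ∑ i, ν i * (c i) ^ 2 := by
      rw [expand x (A *ᵥ x)]
      refine Finset.sum_congr rfl fun i _ => ?_
      rw [hAdot x i]
      ring
    have hsx : ∑ i, x i = ∑ i, e i * c i := by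
      have h1 : ((fun _ => (1:ℝ)) : Fin n → ℝ) ⬝ᵥ x = ∑ i, x i := by simp [dotProduct]
      rw [← h1, expand]
    have hee : ∑ i, (e i) ^ 2 = (n : ℝ) := by
      have h1 : ((fun _ => (1:ℝ)) : Fin n → ℝ) ⬝ᵥ ((fun _ => (1:ℝ)) : Fin n → ℝ) = (n : ℝ) := by
        simp [dotProduct]
      rw [← h1, expand]
      exact Finset.sum_congr rfl fun i _ => sq (e i)
    have heig_e : ∀ i, ν i * e i = (d : ℝ) * e i := by
      intro i
      have h1 := hAdot (fun _ => (1 : ℝ)) i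
      rw [hones] at h1
      rw [← h1, he]
      simp [dotProduct, Finset.mul_sum, mul_comm]
    have hp0 : 0 ≤ p := by
      rw [hp]; positivity
    by_cases hcase : ν i₀ ≤ lam
    · have hall : ∀ i, ν i ≤ lam := by
        intro i
        by_cases h : i = i₀
        · rw [h]; exact hcase
        · exact hν_le i h
      calc x ⬝ᵥ (A *ᵥ x) = ∑ i, ν i * (c i) ^ 2 := hAx
        _ ≤ ∑ i, lam * (c i) ^ 2 := by
            refine Finset.sum_le_sum fun i _ => ?_
            exact mul_le_mul_of_nonneg_right (hall i) (sq_nonneg _)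
        _ = lam * (x ⬝ᵥ x) := by rw [hxx, Finset.mul_sum]
        _ ≤ lam * (x ⬝ᵥ x) + p * (∑ i, x i) ^ 2 := by nlinarith [sq_nonneg (∑ i, x i)]
    · push_neg at hcase
      have he0 : ∀ i, i ≠ i₀ → e i = 0 := by
        intro i hi
        by_contra hne
        have h1 : ν i = d := by
          have := heig_e i
          field_simp at this
          exact mul_right_cancel₀ hne (heig_e i)
        have h2 : ν i ≤ lam := hν_le i hi
        have h3 : ν i₀ ≤ d := (abs_le.mp (hbound i₀)).2
        linarith
      have he0' : (e i₀) ^ 2 = (n : ℝ) := by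
        rw [← hee]
        rw [Finset.sum_eq_single i₀]
        · intro b _ hb; rw [he0 b hb]; ring
        · intro h; exact absurd (Finset.mem_univ i₀) h
      have hsx' : (∑ i, x i) ^ 2 = (n : ℝ) * (c i₀) ^ 2 := by
        rw [hsx, Finset.sum_eq_single i₀]
        · rw [mul_pow, he0']
        · intro b _ hb; rw [he0 b hb]; ring
        · intro h; exact absurd (Finset.mem_univ i₀) h
      have hνi₀ : ν i₀ ≤ (d : ℝ) := (abs_le.mp (hbound i₀)).2
      have hn0 : (n : ℝ) ≠ 0 := by positivity
      have hpd : p * (∑ i, x i) ^ 2 = (d : ℝ) * (c i₀) ^ 2 := by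
        rw [hsx', hp]
        field_simp
      have hsplit : x ⬝ᵥ (A *ᵥ x)
          = ν i₀ * (c i₀) ^ 2 + ∑ i ∈ Finset.univ.erase i₀, ν i * (c i) ^ 2 := by
        rw [hAx, ← Finset.add_sum_erase _ _ (Finset.mem_univ i₀)]
      have hrest : ∑ i ∈ Finset.univ.erase i₀, ν i * (c i) ^ 2
          ≤ lam * (x ⬝ᵥ x) := by
        have h1 : ∑ i ∈ Finset.univ.erase i₀, ν i * (c i) ^ 2
            ≤ ∑ i ∈ Finset.univ.erase i₀, lam * (c i) ^ 2 := by
          refine Finset.sum_le_sum fun i hi => ?_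
          exact mul_le_mul_of_nonneg_right (hν_le i (Finset.ne_of_mem_erase hi)) (sq_nonneg _)
        have h2 : ∑ i ∈ Finset.univ.erase i₀, lam * (c i) ^ 2
            ≤ ∑ i, lam * (c i) ^ 2 := by
          refine Finset.sum_le_sum_of_subset_of_nonneg (Finset.subset_univ _) fun i _ _ => ?_
          positivity
        rw [hxx, Finset.mul_sum]
        exact h1.trans h2
      have hfirst : ν i₀ * (c i₀) ^ 2 ≤ p * (∑ i, x i) ^ 2 := by
        rw [hpd]
        exact mul_le_mul_of_nonneg_right hνi₀ (sq_nonneg _)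
      linarith
  -- the matrix M
  set J : Matrix (Fin n) (Fin n) ℝ := Matrix.of (fun _ _ => (1 : ℝ)) with hJ
  set M : Matrix (Fin n) (Fin n) ℝ :=
    (1 - α) • (1 : Matrix (Fin n) (Fin n) ℝ) - β • A + α • J with hM
  have hs : 0 < lam + p := by
    have : 0 < p := by rw [hp]; positivity
    linarith
  have hβ0 : 0 ≤ β := by rw [hβ]; positivity
  have hone_sub : 1 - α = β * lam := by
    rw [hα, hβ]; field_simp; ring
  have hαβ : α = β * p := by
    rw [hα, hβ]; field_simp
  have hMform : ∀ x : Fin n → ℝ,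
      x ⬝ᵥ (M *ᵥ x) = (1 - α) * (x ⬝ᵥ x) - β * (x ⬝ᵥ (A *ᵥ x)) + α * (∑ i, x i) ^ 2 := by
    intro x
    have hJv : J *ᵥ x = fun _ => ∑ j, x j := by
      funext i
      simp [hJ, Matrix.mulVec, dotProduct]
    rw [hM]
    rw [Matrix.add_mulVec, Matrix.sub_mulVec]
    rw [Matrix.smul_mulVec, Matrix.smul_mulVec, Matrix.smul_mulVec]
    rw [Matrix.one_mulVec]
    rw [dotProduct_add, dotProduct_sub]
    rw [dotProduct_smul, dotProduct_smul, dotProduct_smul]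
    have hJx : x ⬝ᵥ (J *ᵥ x) = (∑ i, x i) ^ 2 := by
      rw [hJv]
      simp [dotProduct, ← Finset.sum_mul, sq]
    rw [hJx]
    simp [smul_eq_mul]
  have hMpsd : M.PosSemidef := by
    refine Matrix.PosSemidef.of_dotProduct_mulVec_nonneg ?_ ?_
    · rw [Matrix.IsHermitian]
      ext i j
      simp only [hM, Matrix.conjTranspose_apply, Matrix.add_apply, Matrix.sub_apply,
        Matrix.smul_apply, Matrix.one_apply, Matrix.of_apply, hJ, hAdef,
        SimpleGraph.adjMatrix_apply, smul_eq_mul, star_trivial]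
      by_cases h : j = i
      · subst h; simp
      · have h' : ¬ i = j := fun hh => h hh.symm
        simp only [h, h', if_false]
        rw [if_congr (G.adj_comm j i) rfl rfl]
    · intro x
      rw [star_trivial, hMform x]
      have := key x
      rw [hone_sub, hαβ]
      nlinarith [key x]
  -- the goal matrix is the entrywise square of M
  have hgoal : (1 - α ^ 2) • (1 : Matrix (Fin n) (Fin n) ℝ) + (β ^ 2 - 2 * α * β) • A
      + α ^ 2 • Matrix.of (fun _ _ => (1 : ℝ)) = Matrix.hadamard M M := by
    ext i j
    simp only [hM, hJ, Matrix.hadamard_apply, Matrix.add_apply, Matrix.sub_apply,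
      Matrix.smul_apply, Matrix.one_apply, Matrix.of_apply, hAdef,
      SimpleGraph.adjMatrix_apply, smul_eq_mul]
    by_cases h : i = j
    · subst h
      simp [G.irrefl]
    · simp only [h, if_false]
      by_cases hadj : G.Adj i j
      · simp [hadj]; ring
      · simp [hadj]; ring
  rw [hgoal]
  exact hadamard_self_posSemidef hMpsd
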